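/- For real numbers x, y with 0 < x < |y|, the sum ∑_{k=0}^{∞} y²/(y² + (x+k)²) is strictly greater than |y|/2. -/

import Mathlib

open Filter

theorem sum_gt_two (x y : ℝ) (hx : 0 < x) (hxy : x < |y|) :
    (∑' k : ℕ, y ^ 2 / (y ^ 2 + (x + k) ^ 2)) > |y| / 2 := by
  set a := |y| with ha_def
  have ha : 0 < a := lt_trans hx hxy
  have hy2 : y ^ 2 = a ^ 2 := (sq_abs y).symm
  set B := Real.sqrt (x ^ 2 + a ^ 2) with hB_def
  have hB2 : B ^ 2 = x ^ 2 + a ^ 2 := Real.sq_sqrt (by positivity)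
  have hBnn : 0 ≤ B := Real.sqrt_nonneg _
  have hBx : x ≤ B := by nlinarith
  have hB0 : 0 < B := lt_of_lt_of_le hx hBx
  -- key per-term lower bound
  have key : ∀ k : ℕ, a ^ 2 / ((k : ℝ) + B) - a ^ 2 / (((k : ℝ) + 1) + B)
      ≤ y ^ 2 / (y ^ 2 + (x + k) ^ 2) := by
    intro k
    have hk : (0 : ℝ) ≤ k := Nat.cast_nonneg k
    have h1 : (0 : ℝ) < (k : ℝ) + B := by linarith
    have h2 : (0 : ℝ) < ((k : ℝ) + 1) + B := by linarith
    have heq : a ^ 2 / ((k : ℝ) + B) - a ^ 2 / (((k : ℝ) + 1) + B)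
        = a ^ 2 / (((k : ℝ) + B) * (((k : ℝ) + 1) + B)) := by
      field_simp; ring
    rw [heq, hy2]
    have hle : a ^ 2 + (x + k) ^ 2 ≤ ((k : ℝ) + B) * (((k : ℝ) + 1) + B) := by
      nlinarith
    have hpos : (0 : ℝ) < a ^ 2 + (x + k) ^ 2 := by positivity
    exact div_le_div_of_nonneg_left (by positivity) hpos hle
  -- summability
  set m := min x 1 with hm_def
  have hm : 0 < m := lt_min hx one_pos
  have hf : Summable (fun k : ℕ => y ^ 2 / (y ^ 2 + (x + k) ^ 2)) := by
    have hbase : Summable (fun k : ℕ => 1 / ((k : ℝ) + 1) ^ 2) := by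
      have h1 : Summable (fun n : ℕ => 1 / (n : ℝ) ^ 2) :=
        Real.summable_one_div_nat_pow.mpr one_lt_two
      have h2 : Summable (fun n : ℕ => 1 / ((n + 1 : ℕ) : ℝ) ^ 2) :=
        (summable_nat_add_iff 1).mpr h1
      convert h2 using 2 with k
      push_cast
      ring
    have hsum : Summable (fun k : ℕ => (y ^ 2 / m ^ 2) * (1 / ((k : ℝ) + 1) ^ 2)) :=
      hbase.mul_left _
    apply hsum.of_nonneg_of_le (fun k => by positivity)
    intro k
    have hk : (0 : ℝ) ≤ k := Nat.cast_nonneg k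
    have hmx : m ≤ x := min_le_left _ _
    have hm1 : m ≤ 1 := min_le_right _ _
    have hmk : m * ((k : ℝ) + 1) ≤ x + k := by nlinarith
    have hmm : m * ((k : ℝ) + 1) * (m * ((k : ℝ) + 1)) ≤ (x + k) * (x + k) :=
      mul_le_mul hmk hmk (by positivity) (by linarith)
    have hsq : m ^ 2 * ((k : ℝ) + 1) ^ 2 ≤ y ^ 2 + (x + k) ^ 2 := by
      nlinarith [sq_nonneg y]
    have hpos : (0 : ℝ) < m ^ 2 * ((k : ℝ) + 1) ^ 2 := by positivity
    calc y ^ 2 / (y ^ 2 + (x + k) ^ 2) ≤ y ^ 2 / (m ^ 2 * ((k : ℝ) + 1) ^ 2) :=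
          div_le_div_of_nonneg_left (by positivity) hpos hsq
      _ = (y ^ 2 / m ^ 2) * (1 / ((k : ℝ) + 1) ^ 2) := by
          rw [div_mul_div_comm, mul_one]
  -- partial sums bound
  have hpartial : ∀ n : ℕ, a ^ 2 / B - a ^ 2 / ((n : ℝ) + B)
      ≤ ∑ k ∈ Finset.range n, y ^ 2 / (y ^ 2 + (x + k) ^ 2) := by
    intro n
    have htel := Finset.sum_range_sub' (fun k : ℕ => a ^ 2 / ((k : ℝ) + B)) n
    have hsum_le : ∑ k ∈ Finset.range n,
        (a ^ 2 / ((k : ℝ) + B) - a ^ 2 / (((k : ℝ) + 1) + B))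
        ≤ ∑ k ∈ Finset.range n, y ^ 2 / (y ^ 2 + (x + k) ^ 2) :=
      Finset.sum_le_sum fun k _ => key k
    have hcast : ∑ k ∈ Finset.range n,
        (a ^ 2 / ((k : ℝ) + B) - a ^ 2 / (((k : ℝ) + 1) + B))
        = a ^ 2 / B - a ^ 2 / ((n : ℝ) + B) := by
      have h0 := htel
      push_cast at h0
      rw [h0, zero_add]
    linarith [hcast ▸ hsum_le]
  -- take limits
  have hlim2 : Tendsto (fun n : ℕ => a ^ 2 / ((n : ℝ) + B)) atTop (nhds 0) :=
    Tendsto.div_atTop tendsto_const_nhds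
      (tendsto_atTop_add_const_right _ B tendsto_natCast_atTop_atTop)
  have hlim : Tendsto (fun n : ℕ => a ^ 2 / B - a ^ 2 / ((n : ℝ) + B)) atTop
      (nhds (a ^ 2 / B - 0)) := tendsto_const_nhds.sub hlim2
  have hmain : a ^ 2 / B - 0 ≤ ∑' k : ℕ, y ^ 2 / (y ^ 2 + (x + k) ^ 2) :=
    le_of_tendsto_of_tendsto' hlim hf.hasSum.tendsto_sum_nat hpartial
  have hBlt : B < 2 * a := by nlinarith
  have hfin : a / 2 < a ^ 2 / B := by
    rw [div_lt_div_iff₀ two_pos hB0]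
    nlinarith
  linarith
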